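/- Let n ≥ 1, let S be an invertible complex n×n matrix, and let B ⊆ M_n(ℂ) be a set of Hermitian matrices whose ℂ-linear span is all of M_n(ℂ), such that S·X·S⁻¹ is Hermitian for every X ∈ B. Then S†S = λ·1 for some real λ > 0; equivalently, λ^{−1/2}·S is unitary. The same conclusion holds if 'Hermitian' is replaced by 'unitary' throughout (B consists of unitary matrices spanning M_n(ℂ), and S·X·S⁻¹ is unitary for every X ∈ B). -/

import Mathlib

open Matrix

lemma aux14 {n : ℕ} (hn : 1 ≤ n)
    (S : Matrix (Fin n) (Fin n) ℂ) (hS : IsUnit S)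
    (B : Set (Matrix (Fin n) (Fin n) ℂ)) (hspan : Submodule.span ℂ B = ⊤)
    (hcomm : ∀ X ∈ B, Commute (Sᴴ * S) X) :
    ∃ l : ℝ, 0 < l ∧ Sᴴ * S = (l : ℂ) • (1 : Matrix (Fin n) (Fin n) ℂ) ∧
      (((Real.sqrt l)⁻¹ : ℝ) : ℂ) • S ∈ Matrix.unitaryGroup (Fin n) ℂ := by
  have : NeZero n := ⟨by omega⟩
  set T := Sᴴ * S with hT
  have hall : ∀ X : Matrix (Fin n) (Fin n) ℂ, Commute T X := by
    intro X
    have hX : X ∈ Submodule.span ℂ B := hspan ▸ Submodule.mem_top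
    induction hX using Submodule.span_induction with
    | mem x hx => exact hcomm x hx
    | zero => exact Commute.zero_right T
    | add x y _ _ hx hy => exact hx.add_right hy
    | smul c x _ hx => exact hx.smul_right c
  obtain ⟨c, hc⟩ := Matrix.mem_range_scalar_of_commute_single
    (fun i j _ => (hall _).symm)
  have hc1 : T = c • (1 : Matrix (Fin n) (Fin n) ℂ) := by
    rw [← hc]; ext i j; simp [Matrix.scalar_apply, Matrix.diagonal, Matrix.one_apply]
  set l : ℝ := ∑ j, Complex.normSq (S j 0) with hl
  have hcl : c = (l : ℂ) := by
    have h00 : T 0 0 = c := by rw [hc1]; simp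
    rw [← h00, hT, Matrix.mul_apply]
    simp [Matrix.conjTranspose_apply, hl, Complex.normSq_eq_conj_mul_self]
  have hTunit : IsUnit T := (hS.star).mul hS
  have hcne : c ≠ 0 := by
    rintro rfl
    rw [zero_smul] at hc1
    rw [hc1] at hTunit
    exact not_isUnit_zero hTunit
  have hl0 : 0 ≤ l := Finset.sum_nonneg fun j _ => Complex.normSq_nonneg _
  have hlpos : 0 < l := lt_of_le_of_ne hl0 fun h => hcne (by rw [hcl, ← h]; simp)
  refine ⟨l, hlpos, by rw [← hcl]; exact hc1, ?_⟩
  rw [Matrix.mem_unitaryGroup_iff']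
  have hstar : star ((((Real.sqrt l)⁻¹ : ℝ) : ℂ) • S) = (((Real.sqrt l)⁻¹ : ℝ) : ℂ) • Sᴴ := by
    simp [Matrix.star_eq_conjTranspose]
  have hreal : (Real.sqrt l)⁻¹ * (Real.sqrt l)⁻¹ * l = 1 := by
    rw [← mul_inv, Real.mul_self_sqrt hl0, inv_mul_cancel₀ (ne_of_gt hlpos)]
  have key : (((Real.sqrt l)⁻¹ : ℝ) : ℂ) * (((Real.sqrt l)⁻¹ : ℝ) : ℂ) * (l : ℂ) = 1 := by
    exact_mod_cast congrArg (Complex.ofReal) hreal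
  rw [hstar, Matrix.smul_mul, Matrix.mul_smul, ← hT, hc1, hcl, smul_smul, smul_smul, key,
    one_smul]

theorem stmt14 {n : ℕ} (hn : 1 ≤ n)
    (S : Matrix (Fin n) (Fin n) ℂ) (hS : IsUnit S) :
    (∀ B : Set (Matrix (Fin n) (Fin n) ℂ),
      (∀ X ∈ B, Xᴴ = X) →
      Submodule.span ℂ B = ⊤ →
      (∀ X ∈ B, (S * X * S⁻¹)ᴴ = S * X * S⁻¹) →
      ∃ l : ℝ, 0 < l ∧ Sᴴ * S = (l : ℂ) • (1 : Matrix (Fin n) (Fin n) ℂ) ∧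
        (((Real.sqrt l)⁻¹ : ℝ) : ℂ) • S ∈ Matrix.unitaryGroup (Fin n) ℂ) ∧
    (∀ B : Set (Matrix (Fin n) (Fin n) ℂ),
      (∀ X ∈ B, X ∈ Matrix.unitaryGroup (Fin n) ℂ) →
      Submodule.span ℂ B = ⊤ →
      (∀ X ∈ B, S * X * S⁻¹ ∈ Matrix.unitaryGroup (Fin n) ℂ) →
      ∃ l : ℝ, 0 < l ∧ Sᴴ * S = (l : ℂ) • (1 : Matrix (Fin n) (Fin n) ℂ) ∧
        (((Real.sqrt l)⁻¹ : ℝ) : ℂ) • S ∈ Matrix.unitaryGroup (Fin n) ℂ) := by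
  have hSinv : S * S⁻¹ = 1 := Matrix.mul_nonsing_inv S
    ((Matrix.isUnit_iff_isUnit_det S).mp hS)
  have hSinv' : S⁻¹ * S = 1 := Matrix.nonsing_inv_mul S
    ((Matrix.isUnit_iff_isUnit_det S).mp hS)
  have hss : Sᴴ * S⁻¹ᴴ = 1 := by
    rw [← Matrix.conjTranspose_mul, hSinv', Matrix.conjTranspose_one]
  constructor
  · intro B hherm hspan hconj
    apply aux14 hn S hS B hspan
    intro X hX
    have h := hconj X hX
    rw [Matrix.conjTranspose_mul, Matrix.conjTranspose_mul, hherm X hX] at h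
    have h2 := congrArg (fun M => Sᴴ * M * S) h
    simp only [mul_assoc] at h2
    rw [hSinv', mul_one, ← mul_assoc Sᴴ S⁻¹ᴴ, hss, one_mul] at h2
    unfold Commute SemiconjBy
    rw [mul_assoc, ← h2]
  · intro B hunit hspan hconj
    apply aux14 hn S hS B hspan
    intro X hX
    have hXu' : X * star X = 1 := (Matrix.mem_unitaryGroup_iff).mp (hunit X hX)
    have h := (Matrix.mem_unitaryGroup_iff').mp (hconj X hX)
    rw [Matrix.star_eq_conjTranspose, Matrix.conjTranspose_mul, Matrix.conjTranspose_mul] at h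
    have h2 := congrArg (fun M => Sᴴ * M * S) h
    simp only [mul_assoc, mul_one, one_mul] at h2
    rw [hSinv', mul_one, ← mul_assoc Sᴴ S⁻¹ᴴ, hss, one_mul] at h2
    -- h2 : Xᴴ * (Sᴴ * (S * X)) = Sᴴ * S
    have h3 := congrArg (fun M => X * M) h2
    simp only [← mul_assoc] at h3
    rw [show X * Xᴴ = 1 from by rw [← Matrix.star_eq_conjTranspose]; exact hXu', one_mul] at h3
    unfold Commute SemiconjBy
    rw [h3, mul_assoc]
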